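/- Let u ∈ H¹(ℝ²) (or with u ∈ \dot H¹₀) satisfy the antisymmetry u(x₁, x₂) = −u(x₁, −x₂) for all (x₁,x₂). Then there is a constant C (independent of u) such that ∫_{ℝ²} |u(x)|²/|x|² dx ≤ C ∫_{ℝ²} |∇u(x)|² dx. -/

import Mathlib

open MeasureTheory
open Set

lemma integrable_of_le_indicator {α : Type*} [MeasurableSpace α] {μ : Measure α} {f : α → ℝ}
    {K : Set α} (hm : AEStronglyMeasurable f μ) (hK : MeasurableSet K) (hμK : μ K < ⊤)
    {C : ℝ} (hb : ∀ t, |f t| ≤ C) (hsupp : ∀ t ∉ K, f t = 0) : Integrable f μ := by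
  refine Integrable.mono' (g := K.indicator fun _ => C) ?_ hm
    (Filter.Eventually.of_forall fun t => ?_)
  · rw [integrable_indicator_iff hK]
    exact integrableOn_const hμK.ne
  · by_cases ht : t ∈ K
    · simpa [Set.indicator_of_mem ht, Real.norm_eq_abs] using hb t
    · simp [Set.indicator_of_notMem ht, hsupp t ht]

section oneD
variable {g : ℝ → ℝ}

/-- pointwise bound `|g t| ≤ L |t|` from Lipschitz + vanishing at 0. -/
lemma abs_le_of_lip {L : NNReal} (hL : LipschitzWith L g) (h0 : g 0 = 0) (t : ℝ) :
    |g t| ≤ L * |t| := by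
  have := hL.dist_le_mul t 0
  simpa [Real.dist_eq, h0] using this

lemma integrable_sq_div_sq (hg : ContDiff ℝ 1 g) (hs : HasCompactSupport g) (h0 : g 0 = 0) :
    Integrable (fun t => g t ^ 2 / t ^ 2) := by
  obtain ⟨L, hL⟩ := hg.lipschitzWith_of_hasCompactSupport hs one_ne_zero
  refine integrable_of_le_indicator (K := tsupport g)
    (((hg.continuous.pow 2).measurable.div ((measurable_id.pow_const 2))).aestronglyMeasurable)
    (isClosed_tsupport g).measurableSet hs.measure_lt_top (C := (L : ℝ) ^ 2)
    (fun t => ?_) (fun t ht => by simp [image_eq_zero_of_notMem_tsupport ht])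
  rcases eq_or_ne t 0 with rfl | ht
  · simp [h0]
  · have h1 : |g t| ≤ L * |t| := abs_le_of_lip hL h0 t
    have h2 : (0:ℝ) < t ^ 2 := by positivity
    rw [abs_of_nonneg (by positivity)]
    rw [div_le_iff₀ h2]
    calc g t ^ 2 = |g t| ^ 2 := (sq_abs _).symm
      _ ≤ (L * |t|) ^ 2 := by gcongr
      _ = (L:ℝ)^2 * t ^ 2 := by rw [mul_pow, sq_abs]

lemma integrable_cross (hg : ContDiff ℝ 1 g) (hs : HasCompactSupport g) (h0 : g 0 = 0) :
    Integrable (fun t => 2 * g t * deriv g t / t) := by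
  obtain ⟨L, hL⟩ := hg.lipschitzWith_of_hasCompactSupport hs one_ne_zero
  obtain ⟨M, hM⟩ := (hs.deriv).exists_bound_of_continuous (hg.continuous_deriv le_rfl)
  have hM0 : (0:ℝ) ≤ M := le_trans (norm_nonneg _) (hM 0)
  refine integrable_of_le_indicator (K := tsupport g)
    ((((continuous_const.mul hg.continuous).mul (hg.continuous_deriv le_rfl)).measurable.div
      measurable_id).aestronglyMeasurable)
    (isClosed_tsupport g).measurableSet hs.measure_lt_top (C := 2 * L * M)
    (fun t => ?_) (fun t ht => by simp [image_eq_zero_of_notMem_tsupport ht])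
  rcases eq_or_ne t 0 with rfl | ht
  · simp; positivity
  · have h1 : |g t| ≤ L * |t| := abs_le_of_lip hL h0 t
    have h2 : |deriv g t| ≤ M := by simpa [Real.norm_eq_abs] using hM t
    have ht' : (0:ℝ) < |t| := abs_pos.2 ht
    rw [abs_div, div_le_iff₀ ht']
    calc |2 * g t * deriv g t| = 2 * |g t| * |deriv g t| := by
          rw [abs_mul, abs_mul]; norm_num
      _ ≤ 2 * (L * |t|) * M := by gcongr
      _ = 2 * L * M * |t| := by ring

lemma integrable_deriv_sq (hg : ContDiff ℝ 1 g) (hs : HasCompactSupport g) :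
    Integrable (fun t => deriv g t ^ 2) := by
  apply Continuous.integrable_of_hasCompactSupport
  · exact (hg.continuous_deriv le_rfl).pow 2
  · exact (hs.deriv).comp_left (g := fun y : ℝ => y ^ 2) (by simp)

lemma hardy1D_Ioi (hg : ContDiff ℝ 1 g) (hs : HasCompactSupport g) (h0 : g 0 = 0) :
    ∫ t in Ioi (0:ℝ), g t ^ 2 / t ^ 2 ≤ 4 * ∫ t in Ioi (0:ℝ), deriv g t ^ 2 := by
  obtain ⟨L, hL⟩ := hg.lipschitzWith_of_hasCompactSupport hs one_ne_zero
  have int1 := (integrable_sq_div_sq hg hs h0).integrableOn (s := Ioi 0)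
  have int2 := (integrable_cross hg hs h0).integrableOn (s := Ioi 0)
  have int3 := (integrable_deriv_sq hg hs).integrableOn (s := Ioi 0)
  -- FTC on (0, ∞) for f t = g t ^ 2 / t
  have key : ∫ t in Ioi (0:ℝ), (2 * g t * deriv g t / t - g t ^ 2 / t ^ 2) = 0 := by
    have hderiv : ∀ t ∈ Ioi (0:ℝ),
        HasDerivAt (fun t => g t ^ 2 / t) (2 * g t * deriv g t / t - g t ^ 2 / t ^ 2) t := by
      intro t ht
      have ht' : t ≠ 0 := ne_of_gt ht
      have h1 : HasDerivAt (fun t => g t ^ 2) (2 * g t * deriv g t) t := by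
        simpa [mul_comm] using ((hg.differentiable one_ne_zero t).hasDerivAt).fun_pow 2
      have := h1.fun_div (hasDerivAt_id t) ht'
      refine this.congr_deriv ?_
      simp only [id]
      field_simp
    have hcont : ContinuousWithinAt (fun t => g t ^ 2 / t) (Ici 0) 0 := by
      apply ContinuousAt.continuousWithinAt
      have hbd : ∀ t : ℝ, ‖g t ^ 2 / t‖ ≤ (L:ℝ)^2 * |t| := by
        intro t
        rcases eq_or_ne t 0 with rfl | ht
        · simp
        · have h1 : |g t| ≤ L * |t| := abs_le_of_lip hL h0 t
          have ht' : (0:ℝ) < |t| := abs_pos.2 ht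
          rw [Real.norm_eq_abs, abs_div, div_le_iff₀ ht']
          calc |g t ^ 2| = |g t| ^ 2 := abs_pow _ 2
            _ ≤ (L * |t|) ^ 2 := by gcongr
            _ = (L:ℝ)^2 * |t| * |t| := by rw [mul_pow]; ring
      have : Filter.Tendsto (fun t => g t ^ 2 / t) (nhds 0) (nhds 0) := by
        apply squeeze_zero_norm hbd
        have : Filter.Tendsto (fun t : ℝ => (L:ℝ)^2 * |t|) (nhds 0) (nhds ((L:ℝ)^2 * |(0:ℝ)|)) :=
          (continuous_const.mul continuous_abs).tendsto 0
        simpa using this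
      simpa [ContinuousAt, h0] using this
    have htop : Filter.Tendsto (fun t => g t ^ 2 / t) Filter.atTop (nhds 0) := by
      obtain ⟨R, hR⟩ := hs.isBounded.subset_closedBall 0
      apply Filter.Tendsto.congr' (f₁ := fun _ => (0:ℝ))
      · filter_upwards [Filter.eventually_gt_atTop R] with t ht
        have : t ∉ tsupport g := by
          intro h
          have := hR h
          simp only [Metric.mem_closedBall, Real.dist_eq, sub_zero] at this
          linarith [le_abs_self t]
        simp [image_eq_zero_of_notMem_tsupport this]
      · exact tendsto_const_nhds
    have := MeasureTheory.integral_Ioi_of_hasDerivAt_of_tendsto hcont hderiv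
      (int2.sub int1) htop
    simpa [h0] using this
  rw [integral_sub int2 int1] at key
  have hI : ∫ t in Ioi (0:ℝ), g t ^ 2 / t ^ 2 = ∫ t in Ioi (0:ℝ), 2 * g t * deriv g t / t := by
    linarith
  have hptw : ∀ t ∈ Ioi (0:ℝ), 2 * g t * deriv g t / t
      ≤ g t ^ 2 / t ^ 2 / 2 + 2 * deriv g t ^ 2 := by
    intro t ht
    have ht' : t ≠ 0 := ne_of_gt ht
    have e1 : g t ^ 2 / t ^ 2 = (g t / t) ^ 2 := by rw [div_pow]
    have e2 : 2 * g t * deriv g t / t = 2 * (g t / t) * deriv g t := by ring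
    rw [e1, e2]
    nlinarith [sq_nonneg (g t / t - 2 * deriv g t)]
  have hmono : ∫ t in Ioi (0:ℝ), 2 * g t * deriv g t / t
      ≤ ∫ t in Ioi (0:ℝ), (g t ^ 2 / t ^ 2 / 2 + 2 * deriv g t ^ 2) :=
    setIntegral_mono_on int2 ((int1.div_const 2).add (int3.const_mul 2))
      measurableSet_Ioi hptw
  rw [integral_add (int1.div_const 2) (int3.const_mul 2), integral_div,
    integral_const_mul] at hmono
  linarith [hI, hmono]

end oneD

lemma hardy1D_Iio (hg : ContDiff ℝ 1 g) (hs : HasCompactSupport g) (h0 : g 0 = 0) :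
    ∫ t in Iio (0:ℝ), g t ^ 2 / t ^ 2 ≤ 4 * ∫ t in Iio (0:ℝ), deriv g t ^ 2 := by
  have hh : ContDiff ℝ 1 (fun t => g (-t)) := hg.comp (contDiff_id.neg)
  have hsh : HasCompactSupport (fun t => g (-t)) := hs.comp_homeomorph (Homeomorph.neg ℝ)
  have h0' : g (-(0:ℝ)) = 0 := by simpa using h0
  have key := hardy1D_Ioi hh hsh h0'
  have e1 : ∫ t in Ioi (0:ℝ), g (-t) ^ 2 / t ^ 2 = ∫ t in Iio (0:ℝ), g t ^ 2 / t ^ 2 := by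
    rw [setIntegral_congr_set Iio_ae_eq_Iic]
    have := integral_comp_neg_Ioi (0:ℝ) (fun t => g t ^ 2 / t ^ 2)
    simp only [neg_zero, neg_sq] at this
    exact this
  have e2 : ∫ t in Ioi (0:ℝ), deriv (fun t => g (-t)) t ^ 2
      = ∫ t in Iio (0:ℝ), deriv g t ^ 2 := by
    rw [setIntegral_congr_set Iio_ae_eq_Iic]
    have := integral_comp_neg_Ioi (0:ℝ) (fun t => deriv g t ^ 2)
    simp only [neg_zero] at this
    rw [← this]
    refine setIntegral_congr_fun measurableSet_Ioi fun t _ => ?_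
    rw [deriv_comp_neg, neg_sq]
  calc ∫ t in Iio (0:ℝ), g t ^ 2 / t ^ 2 = ∫ t in Ioi (0:ℝ), g (-t) ^ 2 / t ^ 2 := e1.symm
    _ ≤ 4 * ∫ t in Ioi (0:ℝ), deriv (fun t => g (-t)) t ^ 2 := key
    _ = 4 * ∫ t in Iio (0:ℝ), deriv g t ^ 2 := by rw [e2]

lemma hardy1D (hg : ContDiff ℝ 1 g) (hs : HasCompactSupport g) (h0 : g 0 = 0) :
    (∫ t : ℝ, g t ^ 2 / t ^ 2) ≤ 4 * ∫ t : ℝ, deriv g t ^ 2 := by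
  have int1 := integrable_sq_div_sq hg hs h0
  have intd := integrable_deriv_sq hg hs
  rw [← intervalIntegral.integral_Iic_add_Ioi int1.integrableOn int1.integrableOn,
    ← intervalIntegral.integral_Iic_add_Ioi intd.integrableOn intd.integrableOn]
  have l1 : ∫ t in Iic (0:ℝ), g t ^ 2 / t ^ 2 = ∫ t in Iio (0:ℝ), g t ^ 2 / t ^ 2 :=
    (setIntegral_congr_set Iio_ae_eq_Iic).symm
  have l2 : ∫ t in Iic (0:ℝ), deriv g t ^ 2 = ∫ t in Iio (0:ℝ), deriv g t ^ 2 :=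
    (setIntegral_congr_set Iio_ae_eq_Iic).symm
  have h1 := hardy1D_Ioi hg hs h0
  have h2 := hardy1D_Iio hg hs h0
  rw [l1, l2]
  linarith

/-- Hardy inequality on the plane for functions odd in the second variable:
there is a constant `C` such that `∫ |u|²/|x|² ≤ C ∫ |∇u|²` for every
compactly supported `C¹` function `u` with `u(x₁,x₂) = -u(x₁,-x₂)`. -/
theorem hardy_inequality_odd :
    ∃ C : ℝ, 0 < C ∧
      ∀ u : ℝ × ℝ → ℝ, ContDiff ℝ 1 u → HasCompactSupport u →
        (∀ x : ℝ × ℝ, u (x.1, x.2) = -u (x.1, -x.2)) →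
        ∫ x : ℝ × ℝ, u x ^ 2 / ‖x‖ ^ 2 ≤ C * ∫ x : ℝ × ℝ, ‖fderiv ℝ u x‖ ^ 2 := by
  refine ⟨4, by norm_num, fun u hu hsupp hodd => ?_⟩
  obtain ⟨L, hL⟩ := hu.lipschitzWith_of_hasCompactSupport hsupp one_ne_zero
  have hax : ∀ a : ℝ, u (a, 0) = 0 := by
    intro a
    have := hodd (a, 0)
    simp only [neg_zero] at this
    linarith
  have hub : ∀ x : ℝ × ℝ, |u x| ≤ L * |x.2| := by
    rintro ⟨a, b⟩
    have h1 := hL.dist_le_mul (a, b) (a, 0)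
    have h2 : dist ((a, b) : ℝ × ℝ) (a, 0) = |b| := by
      rw [Prod.dist_eq]
      simp [Real.dist_eq]
    rw [h2, Real.dist_eq, hax a, sub_zero] at h1
    exact h1
  have hmA : AEStronglyMeasurable (fun x : ℝ × ℝ => u x ^ 2 / ‖x‖ ^ 2) volume :=
    ((hu.continuous.pow 2).measurable.div
      ((continuous_norm.pow 2)).measurable).aestronglyMeasurable
  have hmB : AEStronglyMeasurable (fun x : ℝ × ℝ => u x ^ 2 / x.2 ^ 2) volume :=
    ((hu.continuous.pow 2).measurable.div
      ((continuous_snd.pow 2)).measurable).aestronglyMeasurable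
  have hK : MeasurableSet (tsupport u) := (isClosed_tsupport u).measurableSet
  have hKfin : volume (tsupport u) < ⊤ := IsCompact.measure_lt_top hsupp
  have intA : Integrable (fun x : ℝ × ℝ => u x ^ 2 / ‖x‖ ^ 2) := by
    refine integrable_of_le_indicator hmA hK hKfin (C := (L:ℝ)^2) (fun x => ?_)
      (fun x hx => by simp [image_eq_zero_of_notMem_tsupport hx])
    rw [abs_of_nonneg (by positivity)]
    rcases eq_or_ne x 0 with rfl | hx
    · simp
    · have hx' : (0:ℝ) < ‖x‖ := norm_pos_iff.2 hx
      rw [div_le_iff₀ (by positivity)]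
      calc u x ^ 2 = |u x| ^ 2 := (sq_abs _).symm
        _ ≤ ((L:ℝ) * ‖x‖) ^ 2 := by
            apply pow_le_pow_left₀ (abs_nonneg _)
            exact le_trans (hub x) (by
              have := norm_snd_le x
              rw [Real.norm_eq_abs] at this
              exact mul_le_mul_of_nonneg_left this L.coe_nonneg)
        _ = (L:ℝ)^2 * ‖x‖ ^ 2 := by ring
  have intB : Integrable (fun x : ℝ × ℝ => u x ^ 2 / x.2 ^ 2) := by
    refine integrable_of_le_indicator hmB hK hKfin (C := (L:ℝ)^2) (fun x => ?_)
      (fun x hx => by simp [image_eq_zero_of_notMem_tsupport hx])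
    rw [abs_of_nonneg (by positivity)]
    rcases eq_or_ne x.2 0 with h2 | h2
    · have hx0 : u x = 0 := by
        have : x = (x.1, 0) := by rw [← h2]
        rw [this, hax]
      simp [hx0]
    · rw [div_le_iff₀ (by positivity)]
      calc u x ^ 2 = |u x| ^ 2 := (sq_abs _).symm
        _ ≤ ((L:ℝ) * |x.2|) ^ 2 := pow_le_pow_left₀ (abs_nonneg _) (hub x) 2
        _ = (L:ℝ)^2 * x.2 ^ 2 := by rw [mul_pow, sq_abs]
  have intD : Integrable (fun x : ℝ × ℝ => ‖fderiv ℝ u x‖ ^ 2) := by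
    apply Continuous.integrable_of_hasCompactSupport
    · exact (hu.continuous_fderiv one_ne_zero).norm.pow 2
    · exact (hsupp.fderiv ℝ).comp_left (g := fun y => ‖y‖^2) (by simp)
  -- step 1 : pointwise comparison of the two weights
  have step1 : ∫ x : ℝ × ℝ, u x ^ 2 / ‖x‖ ^ 2 ≤ ∫ x : ℝ × ℝ, u x ^ 2 / x.2 ^ 2 := by
    refine integral_mono intA intB ?_
    rintro ⟨a, b⟩
    rcases eq_or_ne b 0 with rfl | hb
    · simp [hax a]
    · have h1 : b ^ 2 ≤ ‖((a, b) : ℝ × ℝ)‖ ^ 2 := by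
        have := norm_snd_le ((a, b) : ℝ × ℝ)
        rw [Real.norm_eq_abs] at this
        calc b ^ 2 = |b| ^ 2 := (sq_abs b).symm
          _ ≤ ‖((a, b) : ℝ × ℝ)‖ ^ 2 := by gcongr
      exact div_le_div_of_nonneg_left (sq_nonneg _) (by positivity) h1
  -- Fubini setup
  have hvol : (volume : Measure (ℝ × ℝ)) = (volume : Measure ℝ).prod volume :=
    Measure.volume_eq_prod ℝ ℝ
  have intB' : Integrable (fun x : ℝ × ℝ => u x ^ 2 / x.2 ^ 2)
      ((volume : Measure ℝ).prod volume) := by rwa [← hvol]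
  have intD' : Integrable (fun x : ℝ × ℝ => ‖fderiv ℝ u x‖ ^ 2)
      ((volume : Measure ℝ).prod volume) := by rwa [← hvol]
  have eqB : ∫ x : ℝ × ℝ, u x ^ 2 / x.2 ^ 2 = ∫ a : ℝ, ∫ b : ℝ, u (a, b) ^ 2 / b ^ 2 := by
    rw [hvol]
    exact integral_prod _ intB'
  have eqD : ∫ x : ℝ × ℝ, ‖fderiv ℝ u x‖ ^ 2
      = ∫ a : ℝ, ∫ b : ℝ, ‖fderiv ℝ u (a, b)‖ ^ 2 := by
    rw [hvol]
    exact integral_prod _ intD'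
  obtain ⟨R, hR⟩ := hsupp.isBounded.subset_closedBall 0
  have houtside : ∀ a b : ℝ, R < |b| → (a, b) ∉ tsupport u := by
    intro a b hb hmem
    have h1 := hR hmem
    simp only [Metric.mem_closedBall, dist_zero_right] at h1
    have h2 : |b| ≤ R := le_trans (by
      have := norm_snd_le ((a, b) : ℝ × ℝ)
      rwa [Real.norm_eq_abs] at this) h1
    linarith
  -- slicewise Hardy
  have slice : ∀ a : ℝ,
      (∫ b : ℝ, u (a, b) ^ 2 / b ^ 2) ≤ 4 * ∫ b : ℝ, ‖fderiv ℝ u (a, b)‖ ^ 2 := by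
    intro a
    set g : ℝ → ℝ := fun b => u (a, b) with hgdef
    have hgc : ContDiff ℝ 1 g := hu.comp (contDiff_const.prodMk contDiff_id)
    have hgs : HasCompactSupport g := by
      apply HasCompactSupport.intro (isCompact_Icc (a := -R) (b := R))
      intro b hb
      rw [Set.mem_Icc] at hb
      have hgt : R < |b| := not_le.1 fun h => hb (abs_le.1 h)
      show u (a, b) = 0
      exact image_eq_zero_of_notMem_tsupport (houtside a b hgt)
    have hg0 : g 0 = 0 := hax a
    have hgd : ∀ b : ℝ, HasDerivAt g (fderiv ℝ u (a, b) (0, 1)) b := by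
      intro b
      exact ((hu.differentiable one_ne_zero) (a, b)).hasFDerivAt.comp_hasDerivAt b
        ((hasDerivAt_const b a).prodMk (hasDerivAt_id b))
    have hderiv_le : ∀ b : ℝ, deriv g b ^ 2 ≤ ‖fderiv ℝ u (a, b)‖ ^ 2 := by
      intro b
      rw [(hgd b).deriv, ← sq_abs (fderiv ℝ u (a, b) (0, 1))]
      apply pow_le_pow_left₀ (abs_nonneg _)
      have h1 := (fderiv ℝ u (a, b)).le_opNorm ((0:ℝ), (1:ℝ))
      have hn : ‖(((0:ℝ), (1:ℝ)) : ℝ × ℝ)‖ = 1 := by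
        simp [Prod.norm_def]
      rw [hn, mul_one] at h1
      rwa [Real.norm_eq_abs] at h1
    have intg2 : Integrable (fun b => deriv g b ^ 2) := integrable_deriv_sq hgc hgs
    have intDsl : Integrable (fun b : ℝ => ‖fderiv ℝ u (a, b)‖ ^ 2) := by
      apply Continuous.integrable_of_hasCompactSupport
      · exact (((hu.continuous_fderiv one_ne_zero).comp
          (continuous_const.prodMk continuous_id)).norm.pow 2)
      · apply HasCompactSupport.intro (isCompact_Icc (a := -R) (b := R))
        intro b hb
        rw [Set.mem_Icc] at hb
        have hgt : R < |b| := not_le.1 fun h => hb (abs_le.1 h)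
        have hz : fderiv ℝ u (a, b) = 0 := by
          by_contra h
          exact houtside a b hgt ((support_fderiv_subset ℝ)
            (by simpa [Function.mem_support] using h))
        simp [hz]
    calc (∫ b : ℝ, u (a, b) ^ 2 / b ^ 2) = ∫ b : ℝ, g b ^ 2 / b ^ 2 := rfl
      _ ≤ 4 * ∫ b : ℝ, deriv g b ^ 2 := hardy1D hgc hgs hg0
      _ ≤ 4 * ∫ b : ℝ, ‖fderiv ℝ u (a, b)‖ ^ 2 := by
          have := integral_mono intg2 intDsl hderiv_le
          linarith
  -- assemble
  have step2 : ∫ a : ℝ, ∫ b : ℝ, u (a, b) ^ 2 / b ^ 2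
      ≤ ∫ a : ℝ, 4 * ∫ b : ℝ, ‖fderiv ℝ u (a, b)‖ ^ 2 := by
    refine integral_mono ?_ ?_ slice
    · exact intB'.integral_prod_left
    · exact intD'.integral_prod_left.const_mul 4
  calc ∫ x : ℝ × ℝ, u x ^ 2 / ‖x‖ ^ 2 ≤ ∫ x : ℝ × ℝ, u x ^ 2 / x.2 ^ 2 := step1
    _ = ∫ a : ℝ, ∫ b : ℝ, u (a, b) ^ 2 / b ^ 2 := eqB
    _ ≤ ∫ a : ℝ, 4 * ∫ b : ℝ, ‖fderiv ℝ u (a, b)‖ ^ 2 := step2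
    _ = 4 * ∫ a : ℝ, ∫ b : ℝ, ‖fderiv ℝ u (a, b)‖ ^ 2 := integral_const_mul 4 _
    _ = 4 * ∫ x : ℝ × ℝ, ‖fderiv ℝ u x‖ ^ 2 := by rw [← eqD]
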